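/- Let S = ⟨A ∣ u → v⟩ be a left cancellative one-rule SRS. Then M_3 is not embeddable in the reduction graph G_S; that is, there do not exist pairwise distinct words x, y, z_1, z_2, z_3 ∈ A* with x →_S z_i and z_i →_S y for i = 1, 2, 3. -/
import Mathlib


/-- One-step reduction of the one-rule SRS `⟨A ∣ u → v⟩`: `w →_S w'`. -/
def Step {A : Type*} (u v w w' : List A) : Prop :=
  ∃ p q : List A, w = p ++ u ++ q ∧ w' = p ++ v ++ q

/-- One-step reduction of `⟨A ∣ u → v⟩` carried out at position `i`. -/
def StepAt {A : Type*} (u v : List A) (i : ℕ) (w w' : List A) : Prop :=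
  ∃ p q : List A, p.length = i ∧ w = p ++ u ++ q ∧ w' = p ++ v ++ q

/-- The diamond graph `M_k` is embeddable in the reduction graph `G_S` of
`S = ⟨A ∣ u → v⟩`: there are pairwise distinct words `x, y, z_1, …, z_k`
with `x →_S z_i` and `z_i →_S y` for every `i`. -/
def MkEmbeddable {A : Type*} (u v : List A) (k : ℕ) : Prop :=
  ∃ (x y : List A) (z : Fin k → List A),
    Function.Injective z ∧ (∀ i, x ≠ z i) ∧ (∀ i, y ≠ z i) ∧ x ≠ y ∧
    ∀ i, Step u v x (z i) ∧ Step u v (z i) y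

/-- Projection from the decorated alphabet `A ⊕ A` (`inl a` = plain letter `a`,
`inr a` = decorated letter `a•`) back to `A`. -/
def proj {A : Type*} : A ⊕ A → A := Sum.elim id id

/-- One-step reduction of the decorated SRS `S̄` carried out at position `i`:
some word `ū` projecting to `u` is replaced by the fully decorated `v•`. -/
def DecStepAt {A : Type*} (u v : List A) (i : ℕ) (w w' : List (A ⊕ A)) : Prop :=
  ∃ p q ubar : List (A ⊕ A),
    p.length = i ∧ ubar.map proj = u ∧
    w = p ++ ubar ++ q ∧ w' = p ++ v.map Sum.inr ++ q

/-- The leftmost decorated letter of `w` is at position `i`. -/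
def FirstDecorated {A : Type*} (w : List (A ⊕ A)) (i : ℕ) : Prop :=
  (∃ a : A, w[i]? = some (Sum.inr a)) ∧
  ∀ j < i, ∀ a : A, w[j]? ≠ some (Sum.inr a)

/-- The one-rule SRS `⟨A ∣ u → v⟩` is left cancellative:
`u, v` are nonempty and their first letters are distinct. -/
def LeftCancellative {A : Type*} (u v : List A) : Prop :=
  u ≠ [] ∧ v ≠ [] ∧ u.head? ≠ v.head?

/-- `w` is bordered with `T`: `T` is both a prefix and a suffix of `w`. -/
def Bordered {A : Type*} (T w : List A) : Prop :=
  T <+: w ∧ T <:+ w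

/-- `T` is self-overlap-free: `OVL(T) = ∅`, i.e. there is no nonempty `w`
with `T = x ++ w = w ++ y` for nonempty `x, y`. -/
def SelfOverlapFree {A : Type*} (T : List A) : Prop :=
  ∀ w x y : List A, w ≠ [] → x ≠ [] → y ≠ [] → T = x ++ w → T = w ++ y → False

/-- `glue T [R₁, …, R_k] = T R₁ T R₂ ⋯ T R_k T`, the word of `Bord_T` whose
canonical decomposition is `R₁, …, R_k`; thus `φ_T (glue T Rs) = Rs`
(a word of length `Rs.length` over the alphabet `B` of `T`-free words). -/
def glue {A : Type*} (T : List A) : List (List A) → List A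
  | [] => T
  | R :: Rs => T ++ R ++ glue T Rs

section aux

variable {A : Type*}

lemma getElem?_mid (p : List A) {m : List A} (q : List A) (hm : m ≠ []) :
    (p ++ m ++ q)[p.length]? = m.head? := by
  rw [List.append_assoc, List.getElem?_append_right (le_refl _)]
  rw [Nat.sub_self, List.getElem?_append_left (List.length_pos_iff.mpr hm),
    List.head?_eq_getElem?]

lemma getElem?_pre {p : List A} (m q : List A) {j : ℕ} (h : j < p.length) :
    (p ++ m ++ q)[j]? = p[j]? := by
  rw [List.append_assoc, List.getElem?_append_left h]

lemma step_unique_fwd {u x : List A} {p q p' q' : List A}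
    (h : x = p ++ u ++ q) (h' : x = p' ++ u ++ q') (hl : p.length = p'.length) :
    p = p' ∧ q = q' := by
  subst h
  have hp : p = p' := by
    have := congrArg (List.take p.length) h'
    rwa [List.append_assoc, List.append_assoc, List.take_left, hl,
      List.take_left] at this
  subst hp
  simp only [List.append_assoc, List.append_cancel_left_eq,
    List.append_cancel_left_eq] at h'
  exact ⟨rfl, h'⟩

lemma three_pigeon {u v : List A}
    (hlc : LeftCancellative u v)
    (x y : List A) (z : Fin 3 → List A)
    (hinj : Function.Injective z)
    (hstep : ∀ i, Step u v x (z i) ∧ Step u v (z i) y) : False := by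
  obtain ⟨hu, hv, hne⟩ := hlc
  choose p q hx hz using fun i => (hstep i).1
  choose p' q' hz' hy using fun i => (hstep i).2
  set m : Fin 3 → ℕ := fun i => min (p i).length ((p' i).length) with hm
  have hxu : ∀ i, x[m i]? = u.head? := by
    intro i
    rcases le_or_gt (p i).length ((p' i).length) with h | h
    · have : m i = (p i).length := min_eq_left h
      rw [this, hx i, getElem?_mid _ _ hu]
    · have hmi : m i = (p' i).length := min_eq_right h.le
      have h1 : x[m i]? = (p i)[m i]? := by
        rw [hx i]; exact getElem?_pre _ _ (hmi ▸ h)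
      have h2 : (z i)[m i]? = (p i)[m i]? := by
        rw [hz i]; exact getElem?_pre _ _ (hmi ▸ h)
      have h3 : (z i)[m i]? = u.head? := by rw [hmi, hz' i, getElem?_mid _ _ hu]
      rw [h1, ← h2, h3]
  have hyv : ∀ i, y[m i]? = v.head? := by
    intro i
    rcases le_or_gt ((p' i).length) ((p i).length) with h | h
    · have : m i = (p' i).length := min_eq_right h
      rw [this, hy i, getElem?_mid _ _ hv]
    · have hmi : m i = (p i).length := min_eq_left h.le
      have h1 : y[m i]? = (p' i)[m i]? := by
        rw [hy i]; exact getElem?_pre _ _ (hmi ▸ h)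
      have h2 : (z i)[m i]? = (p' i)[m i]? := by
        rw [hz' i]; exact getElem?_pre _ _ (hmi ▸ h)
      have h3 : (z i)[m i]? = v.head? := by rw [hmi, hz i, getElem?_mid _ _ hv]
      rw [h1, ← h2, h3]
  have hagree : ∀ i, ∀ j < m i, x[j]? = y[j]? := by
    intro i j hj
    have hj1 : j < (p i).length := lt_of_lt_of_le hj (min_le_left _ _)
    have hj2 : j < (p' i).length := lt_of_lt_of_le hj (min_le_right _ _)
    have e1 : x[j]? = (z i)[j]? := by
      rw [hx i, hz i, getElem?_pre _ _ hj1, getElem?_pre _ _ hj1]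
    have e2 : (z i)[j]? = y[j]? := by
      rw [hz' i, hy i, getElem?_pre _ _ hj2, getElem?_pre _ _ hj2]
    rw [e1, e2]
  have hmeq : ∀ i k, m i = m k := by
    intro i k
    by_contra hne'
    rcases lt_or_gt_of_ne hne' with h | h
    · exact hne ((hxu i).symm.trans ((hagree k _ h).trans (hyv i)))
    · exact hne ((hxu k).symm.trans ((hagree i _ h).trans (hyv k)))
  have hfwd : ∀ i k, (p i).length = (p k).length → i = k := by
    intro i k h
    obtain ⟨hp, hq⟩ := step_unique_fwd (hx i) (hx k) h
    exact hinj (by rw [hz i, hz k, hp, hq])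
  have hbwd : ∀ i k, (p' i).length = (p' k).length → i = k := by
    intro i k h
    obtain ⟨hp, hq⟩ := step_unique_fwd (hy i) (hy k) h
    exact hinj (by rw [hz' i, hz' k, hp, hq])
  have key : ∀ i : Fin 3, (p i).length = m 0 ∨ (p' i).length = m 0 := by
    intro i
    rcases min_choice (p i).length ((p' i).length) with h | h
    · exact Or.inl (by rw [← hmeq i 0, hm]; exact h.symm)
    · exact Or.inr (by rw [← hmeq i 0, hm]; exact h.symm)
  have h01 : (0 : Fin 3) ≠ 1 := by decide
  have h02 : (0 : Fin 3) ≠ 2 := by decide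
  have h12 : (1 : Fin 3) ≠ 2 := by decide
  rcases key 0 with h0 | h0 <;> rcases key 1 with h1 | h1 <;>
    rcases key 2 with h2 | h2
  · exact h01 (hfwd 0 1 (h0.trans h1.symm))
  · exact h01 (hfwd 0 1 (h0.trans h1.symm))
  · exact h02 (hfwd 0 2 (h0.trans h2.symm))
  · exact h12 (hbwd 1 2 (h1.trans h2.symm))
  · exact h12 (hfwd 1 2 (h1.trans h2.symm))
  · exact h02 (hbwd 0 2 (h0.trans h2.symm))
  · exact h01 (hbwd 0 1 (h0.trans h1.symm))
  · exact h01 (hbwd 0 1 (h0.trans h1.symm))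

end aux

/-- if `S = ⟨A ∣ u → v⟩` is left cancellative then `M_3` is not
embeddable in `G_S`. -/
theorem M3_not_embeddable_of_leftCancellative {A : Type*} (u v : List A)
    (hlc : LeftCancellative u v) :
    ¬ MkEmbeddable u v 3 := by
  rintro ⟨x, y, z, hinj, -, -, -, hstep⟩
  exact three_pigeon hlc x y z hinj hstep
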